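/- For any three points v₁, v₂, v₃ on the unit circle whose convex hull contains the origin, and any point p ∈ ℝ², max(‖p − v₁‖, ‖p − v₂‖, ‖p − v₃‖) ≥ 1. -/

import Mathlib

open Real

/-- For any three points on the unit circle whose convex hull contains the
origin, every point of the plane is at distance at least `1` from one of
them. -/
theorem max_dist_ge_one_of_hull_contains_center
    (v₁ v₂ v₃ : EuclideanSpace ℝ (Fin 2))
    (h₁ : ‖v₁‖ = 1) (h₂ : ‖v₂‖ = 1) (h₃ : ‖v₃‖ = 1)
    (hhull : (0 : EuclideanSpace ℝ (Fin 2)) ∈ convexHull ℝ {v₁, v₂, v₃})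
    (p : EuclideanSpace ℝ (Fin 2)) :
    1 ≤ max (dist p v₁) (max (dist p v₂) (dist p v₃)) := by
  classical
  by_contra h
  push_neg at h
  obtain ⟨hd1, hd2, hd3⟩ : dist p v₁ < 1 ∧ dist p v₂ < 1 ∧ dist p v₃ < 1 := by
    constructor
    · exact lt_of_le_of_lt (le_max_left _ _) h
    constructor
    · exact lt_of_le_of_lt (le_trans (le_max_left _ _) (le_max_right _ _)) h
    · exact lt_of_le_of_lt (le_trans (le_max_right _ _) (le_max_right _ _)) h
  -- key: each vᵢ has inner product with p greater than ‖p‖²/2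
  have key : ∀ v : EuclideanSpace ℝ (Fin 2), ‖v‖ = 1 → dist p v < 1 →
      ‖p‖ ^ 2 / 2 < inner ℝ p v := by
    intro v hv hdv
    have hexp : ‖p - v‖ ^ 2 = ‖p‖ ^ 2 - 2 * inner ℝ p v + ‖v‖ ^ 2 :=
      norm_sub_sq_real p v
    have h1 : ‖p - v‖ ^ 2 < 1 := by
      have : ‖p - v‖ < 1 := by rwa [dist_eq_norm] at hdv
      nlinarith [norm_nonneg (p - v)]
    rw [hv] at hexp
    nlinarith
  -- the finset of the three points
  set s : Finset (EuclideanSpace ℝ (Fin 2)) := {v₁, v₂, v₃} with hs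
  have hcoe : (↑s : Set (EuclideanSpace ℝ (Fin 2))) = {v₁, v₂, v₃} := by
    simp [hs]
  rw [← hcoe, Finset.mem_convexHull] at hhull
  obtain ⟨w, hw0, hw1, hwc⟩ := hhull
  have hmem : ∀ i ∈ s, ‖i‖ = 1 ∧ dist p i < 1 := by
    intro i hi
    simp only [hs, Finset.mem_insert, Finset.mem_singleton] at hi
    rcases hi with rfl | rfl | rfl
    exacts [⟨h₁, hd1⟩, ⟨h₂, hd2⟩, ⟨h₃, hd3⟩]
  -- center of mass equals sum of w i • i
  have hsum : ∑ i ∈ s, w i • i = (0 : EuclideanSpace ℝ (Fin 2)) := by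
    rw [← hwc, Finset.centerMass, hw1, inv_one, one_smul]
    simp
  have hinner : ∑ i ∈ s, w i * inner ℝ p i = (0 : ℝ) := by
    have := congrArg (fun x => (inner ℝ p x : ℝ)) hsum
    simpa [inner_sum, inner_smul_right, mul_comm] using this
  -- strict inequality
  have hex : ∃ i ∈ s, w i ≠ 0 := by
    by_contra hc
    push_neg at hc
    have : ∑ i ∈ s, w i = 0 := Finset.sum_eq_zero hc
    rw [hw1] at this
    norm_num at this
  obtain ⟨i₀, hi₀, hwi₀⟩ := hex
  have hwi₀pos : 0 < w i₀ := lt_of_le_of_ne (hw0 i₀ hi₀) (Ne.symm hwi₀)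
  have hlt : ∑ i ∈ s, w i * (‖p‖ ^ 2 / 2) < ∑ i ∈ s, w i * inner ℝ p i := by
    apply Finset.sum_lt_sum
    · intro i hi
      obtain ⟨hvi, hdi⟩ := hmem i hi
      exact mul_le_mul_of_nonneg_left (le_of_lt (key i hvi hdi)) (hw0 i hi)
    · refine ⟨i₀, hi₀, ?_⟩
      obtain ⟨hvi, hdi⟩ := hmem i₀ hi₀
      exact mul_lt_mul_of_pos_left (key i₀ hvi hdi) hwi₀pos
  rw [← Finset.sum_mul, hw1, one_mul, hinner] at hlt
  nlinarith [norm_nonneg p]
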